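/- arXiv:1004.0888 — 2 statements merged into one kernel-verified Lean document; each statement's English description precedes it below -/
import Mathlib

section
/- Let d ≥ 2 and n ≥ 1, and let A_{a,j} ∈ Matrix (Fin d) (Fin d) ℂ for a ∈ {0,1} and j ∈ Fin n satisfy ∑_j A_{0,j}ᴴ A_{0,j} = ∑_j A_{1,j}ᴴ A_{1,j} = 1 and Tr(A_{0,j}ᴴ A_{1,j}) = 0 for every j. Define the channels Φ_a(ρ) = ∑_{j} E_{jj} ⊗ (A_{a,j} ρ A_{a,j}ᴴ) on Matrix (Fin d) (Fin d) ℂ, with output indexed by (Fin n) × (Fin d), and let φ = (1/√d) ∑_{i} e_i ⊗ e_i be the maximally entangled unit vector in ℂ^d ⊗ ℂ^d. Then Tr[(Φ₀ ⊗ id)(φφᴴ) · (Φ₁ ⊗ id)(φφᴴ)] = 0 and ‖(Φ₀ ⊗ id)(φφᴴ) − (Φ₁ ⊗ id)(φφᴴ)‖₁ = 2; in particular ‖Φ₀ − Φ₁‖_⋄ = 2, so the channels are perfectly distinguishable. -/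
open Matrix Kronecker BigOperators ComplexOrder

noncomputable def traceNorm {n : Type*} [Fintype n] [DecidableEq n] (A : Matrix n n ℂ) : ℝ :=
  (((Matrix.posSemidef_conjTranspose_mul_self A).1.eigenvectorUnitary.1 *
      Matrix.diagonal (((↑) : ℝ → ℂ) ∘ (√·) ∘ (Matrix.posSemidef_conjTranspose_mul_self A).1.eigenvalues) *
      (star (Matrix.posSemidef_conjTranspose_mul_self A).1.eigenvectorUnitary : Matrix n n ℂ)).trace).re

def IsDensity {n : Type*} [Fintype n] (ρ : Matrix n n ℂ) : Prop :=
  ρ.PosSemidef ∧ ρ.trace = 1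

def tensorId {X Y Z : Type*} (Φ : Matrix X X ℂ → Matrix Y Y ℂ)
    (ρ : Matrix (X × Z) (X × Z) ℂ) : Matrix (Y × Z) (Y × Z) ℂ :=
  Matrix.of fun p q => Φ (Matrix.of fun x x' => ρ (x, p.2) (x', q.2)) p.1 q.1

noncomputable def ChoiMatrix {X Y : Type*} [Fintype X] [DecidableEq X] [Fintype Y]
    (Φ : Matrix X X ℂ → Matrix Y Y ℂ) : Matrix (Y × X) (Y × X) ℂ :=
  ∑ j : X, ∑ k : X, (Φ (Matrix.single j k 1)) ⊗ₖ (Matrix.single j k 1)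

def IsChannel {X Y : Type*} [Fintype X] [DecidableEq X] [Fintype Y]
    (Φ : Matrix X X ℂ →ₗ[ℂ] Matrix Y Y ℂ) : Prop :=
  (∀ M, (Φ M).trace = M.trace) ∧ (ChoiMatrix (⇑Φ)).PosSemidef

def SeparableOp {Y Z : Type*} [Fintype Y] [Fintype Z]
    (P : Matrix (Y × Z) (Y × Z) ℂ) : Prop :=
  ∃ (N : ℕ) (Q : Fin N → Matrix Y Y ℂ) (R : Fin N → Matrix Z Z ℂ),
    (∀ i, (Q i).PosSemidef) ∧ (∀ i, (R i).PosSemidef) ∧ P = ∑ i, Q i ⊗ₖ R i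

def partialTranspose {Y Z : Type*} (M : Matrix (Y × Z) (Y × Z) ℂ) :
    Matrix (Y × Z) (Y × Z) ℂ :=
  Matrix.of fun p q => M (p.1, q.2) (q.1, p.2)

def IsPPT {Y Z : Type*} [Fintype Y] [Fintype Z] (M : Matrix (Y × Z) (Y × Z) ℂ) : Prop :=
  M.PosSemidef ∧ (partialTranspose M).PosSemidef

lemma vmv_mul_vmv {ι : Type*} [Fintype ι] (u w : ι → ℂ) :
    Matrix.vecMulVec u (star u) * Matrix.vecMulVec w (star w)
      = (star u ⬝ᵥ w) • Matrix.vecMulVec u (star w) := by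
  ext p q
  simp only [Matrix.mul_apply, Matrix.vecMulVec_apply, Matrix.smul_apply, smul_eq_mul,
    dotProduct, Pi.star_apply, Finset.sum_mul]
  exact Finset.sum_congr rfl fun r _ => by ring

lemma psd_smul_vmv {ι : Type*} [Fintype ι] [DecidableEq ι] (c : ℝ) (hc : 0 ≤ c) (u : ι → ℂ) :
    (((c : ℂ)) • Matrix.vecMulVec u (star u)).PosSemidef := by
  constructor
  · ext p q
    simp only [Matrix.conjTranspose_apply, Matrix.smul_apply, Matrix.vecMulVec_apply,
      Pi.star_apply, star_mul', smul_eq_mul, Complex.star_def, Complex.conj_ofReal,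
      RingHom.map_mul, Complex.conj_conj]
    ring
  · exact ((Matrix.posSemidef_vecMulVec_self_star u).smul (show (0:ℂ) ≤ c by simpa using hc)).2

lemma trace_vmv {ι : Type*} [Fintype ι] (u : ι → ℂ) :
    (Matrix.vecMulVec u (star u)).trace = ∑ p, u p * star (u p) := by
  simp [Matrix.trace, Matrix.diag, Matrix.vecMulVec_apply]

/-- flagged-Kraus channels with entrywise-orthogonal Kraus operators produce
orthogonal (hence perfectly distinguishable) outputs on the maximally entangled state. -/
theorem flagged_channels_perfectly_distinguishable
    (d n : ℕ) (hd : 2 ≤ d) (hn : 1 ≤ n)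
    (A : Fin 2 → Fin n → Matrix (Fin d) (Fin d) ℂ)
    (hA0 : ∑ j, (A 0 j)ᴴ * A 0 j = 1)
    (hA1 : ∑ j, (A 1 j)ᴴ * A 1 j = 1)
    (horth : ∀ j, ((A 0 j)ᴴ * A 1 j).trace = 0)
    (Φ : Fin 2 → Matrix (Fin d) (Fin d) ℂ → Matrix (Fin n × Fin d) (Fin n × Fin d) ℂ)
    (hΦ : ∀ a ρ, Φ a ρ = ∑ j, Matrix.single j j 1 ⊗ₖ (A a j * ρ * (A a j)ᴴ))
    (φ : Fin d × Fin d → ℂ)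
    (hφ : φ = fun p => if p.1 = p.2 then ((1 / Real.sqrt d : ℝ) : ℂ) else 0) :
    ((tensorId (Φ 0) (Matrix.vecMulVec φ (star φ))) *
        (tensorId (Φ 1) (Matrix.vecMulVec φ (star φ)))).trace = 0 ∧
    traceNorm (tensorId (Φ 0) (Matrix.vecMulVec φ (star φ)) -
        tensorId (Φ 1) (Matrix.vecMulVec φ (star φ))) = 2 := by
  have hd0 : (0:ℝ) < d := by positivity
  have hdC : (d : ℂ) ≠ 0 := by exact_mod_cast hd0.ne'
  set ρ := Matrix.vecMulVec φ (star φ) with hρdef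
  set v : Fin 2 → Fin n → ((Fin n × Fin d) × Fin d) → ℂ :=
    fun a j p => if p.1.1 = j then A a j p.1.2 p.2 else 0 with hv
  have key : ∀ a, tensorId (Φ a) ρ
      = ∑ j, ((d : ℂ)⁻¹) • Matrix.vecMulVec (v a j) (star (v a j)) := by
    intro a
    ext p q
    show (Φ a (Matrix.of fun x x' => ρ (x, p.2) (x', q.2))) p.1 q.1 = _
    rw [hΦ]
    simp only [Matrix.sum_apply, Matrix.smul_apply, Matrix.vecMulVec_apply,
      Matrix.kroneckerMap_apply, smul_eq_mul]
    refine Finset.sum_congr rfl fun j _ => ?_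
    have hc' : ((Real.sqrt d : ℝ) : ℂ)⁻¹ * ((Real.sqrt d : ℝ) : ℂ)⁻¹ = (d : ℂ)⁻¹ := by
      rw [← mul_inv, ← Complex.ofReal_mul, Real.mul_self_sqrt hd0.le]; norm_num
    simp only [Matrix.mul_apply, Matrix.conjTranspose_apply, Matrix.of_apply, hρdef,
      Matrix.vecMulVec_apply, hφ, Pi.star_apply, hv, Matrix.single,
      one_div, map_inv₀, Complex.conj_ofReal, apply_ite (starRingEnd ℂ), map_zero,
      mul_ite, ite_mul, mul_zero, zero_mul, mul_one, _root_.inv_zero,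
      Finset.sum_ite_eq, Finset.sum_ite_eq', Finset.mem_univ, if_true]
    simp only [apply_ite (star : ℂ → ℂ), star_zero, Complex.star_def,
      Complex.conj_ofReal, Complex.ofReal_inv, mul_ite, ite_mul, mul_zero, zero_mul,
      Finset.sum_ite_eq', Finset.mem_univ, if_true, one_mul, map_inv₀]
    by_cases hp : j = p.1.1
    · by_cases hq : j = q.1.1
      · rw [if_pos ⟨hp, hq⟩, if_pos hp.symm, if_pos hq.symm, ← hc']; ring
      · rw [if_neg (fun h => hq h.2), if_pos hp.symm, if_neg (fun h => hq h.symm)]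
    · rw [if_neg (fun h => hp h.1), if_neg (fun h => hp h.symm)]
  -- orthogonality of the vectors
  have hdot : ∀ j k, star (v 0 j) ⬝ᵥ v 1 k = 0 := by
    intro j k
    simp only [dotProduct, Pi.star_apply, hv]
    rw [Fintype.sum_prod_type, Fintype.sum_prod_type]
    by_cases hjk : j = k
    · subst hjk
      rw [Finset.sum_eq_single j (fun m _ hm => Finset.sum_eq_zero fun y _ =>
        Finset.sum_eq_zero fun z _ => by simp [hm]) (by simp)]
      simp only [if_true]
      rw [Finset.sum_comm]
      have := horth j
      simpa [Matrix.trace, Matrix.diag, Matrix.mul_apply,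
        Matrix.conjTranspose_apply] using this
    · refine Finset.sum_eq_zero fun m _ => Finset.sum_eq_zero fun y _ =>
        Finset.sum_eq_zero fun z _ => ?_
      by_cases h1 : m = j
      · subst h1; simp [hjk]
      · simp [h1]
  -- positivity
  have hpsd : ∀ a, (tensorId (Φ a) ρ).PosSemidef := by
    intro a
    rw [key a]
    refine Finset.sum_induction _ _ (fun a b ha hb => ha.add hb)
      Matrix.PosSemidef.zero (fun i _ => ?_)
    have h := psd_smul_vmv ((d:ℝ)⁻¹) (by positivity) (v a i)
    simpa using h
  -- product is zero
  have hmul : tensorId (Φ 0) ρ * tensorId (Φ 1) ρ = 0 := by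
    rw [key 0, key 1, Finset.sum_mul]
    refine Finset.sum_eq_zero fun j _ => ?_
    rw [Finset.mul_sum]
    refine Finset.sum_eq_zero fun k _ => ?_
    rw [Matrix.smul_mul, Matrix.mul_smul, vmv_mul_vmv, hdot j k]
    simp
  -- traces
  have htr : ∀ a, (tensorId (Φ a) ρ).trace = 1 := by
    intro a
    rw [key a, Matrix.trace_sum]
    simp only [Matrix.trace_smul, trace_vmv, smul_eq_mul]
    have hsum : ∀ j, (∑ p : (Fin n × Fin d) × Fin d, v a j p * star (v a j p))
        = ((A a j)ᴴ * A a j).trace := by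
      intro j
      rw [Fintype.sum_prod_type, Fintype.sum_prod_type]
      rw [Finset.sum_eq_single j (fun m _ hm => Finset.sum_eq_zero fun y _ =>
        Finset.sum_eq_zero fun z _ => by simp [hv, hm]) (by simp)]
      simp only [hv, if_true]
      rw [Finset.sum_comm, Matrix.trace]
      simp only [Matrix.diag_apply, Matrix.mul_apply, Matrix.conjTranspose_apply]
      exact Finset.sum_congr rfl fun z _ => Finset.sum_congr rfl fun y _ => by
        simp [mul_comm]
    rw [Finset.sum_congr rfl fun j _ => congrArg _ (hsum j), ← Finset.mul_sum,
      ← Matrix.trace_sum]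
    have h1 : ∑ j, ((A a j)ᴴ * A a j) = 1 := by
      fin_cases a
      · exact hA0
      · exact hA1
    rw [h1, Matrix.trace_one]
    simp [hdC]
  have hmul' : tensorId (Φ 1) ρ * tensorId (Φ 0) ρ = 0 := by
    have h := congrArg Matrix.conjTranspose hmul
    rwa [Matrix.conjTranspose_mul, (hpsd 1).1.eq, (hpsd 0).1.eq,
      Matrix.conjTranspose_zero] at h
  refine ⟨by rw [hmul, Matrix.trace_zero], ?_⟩
  set D := tensorId (Φ 0) ρ - tensorId (Φ 1) ρ with hD
  have hS : (tensorId (Φ 0) ρ + tensorId (Φ 1) ρ).PosSemidef := (hpsd 0).add (hpsd 1)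
  have hsq : (tensorId (Φ 0) ρ + tensorId (Φ 1) ρ) ^ 2 = Dᴴ * D := by
    rw [sq, hD, Matrix.conjTranspose_sub, (hpsd 0).1.eq, (hpsd 1).1.eq,
      add_mul, mul_add, mul_add, sub_mul, mul_sub, mul_sub, hmul, hmul']
    abel
  have hsqrt : cfc Real.sqrt (Dᴴ * D)
      = tensorId (Φ 0) ρ + tensorId (Φ 1) ρ := by
    have hSa : IsSelfAdjoint (tensorId (Φ 0) ρ + tensorId (Φ 1) ρ) := hS.1
    rw [← hsq, ← cfc_comp_pow Real.sqrt 2 _ Real.continuous_sqrt.continuousOn hSa,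
      cfc_congr (g := fun x => x), cfc_id' ℝ _ hSa]
    intro x hx
    obtain ⟨i, rfl⟩ := (hS.1.spectrum_real_eq_range_eigenvalues ▸ hx : x ∈ Set.range _)
    exact Real.sqrt_sq (hS.eigenvalues_nonneg i)
  have e : traceNorm D = ((cfc Real.sqrt (Dᴴ * D)).trace).re := by
    rw [(Matrix.posSemidef_conjTranspose_mul_self D).1.cfc_eq]; rfl
  rw [e]
  rw [hsqrt, Matrix.trace_add, htr 0, htr 1]
  norm_num
end

section
/- Let σ_x = !![0, 1; 1, 0], σ_y = !![0, −i; i, 0], σ_z = !![1, 0; 0, −1] be the Pauli matrices in Matrix (Fin 2) (Fin 2) ℂ. Then the maximum over unit vectors ψ ∈ ℂ² of |⟨ψ, σ_x ψ⟩| + |⟨ψ, σ_y ψ⟩| + |⟨ψ, σ_z ψ⟩| equals √3; that is, the sum is at most √3 for every unit vector ψ, with equality attained. (Consequently the corresponding pair of qubit-input channels with N = 3 random unitaries satisfies ‖Φ₀ − Φ₁‖_NE = 2/√3.) -/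
open Matrix Kronecker BigOperators ComplexOrder

lemma pauli_aux (s α β : ℝ) (hs0 : 0 < s) (hα0 : 0 ≤ α) (hβ0 : 0 ≤ β)
    (hnorm : α*α + 2*(β*β) = 1) (h2ab : 2*(α*β) = 1/s) (hz : α*α - 2*(β*β) = 1/s)
    (h3s : 3/s = s) :
    star (![(α:ℂ), (β:ℂ)*(1+Complex.I)]) ⬝ᵥ (![(α:ℂ), (β:ℂ)*(1+Complex.I)]) = 1 ∧
      ‖star (![(α:ℂ), (β:ℂ)*(1+Complex.I)]) ⬝ᵥ (!![0, 1; 1, 0] : Matrix (Fin 2) (Fin 2) ℂ).mulVec (![(α:ℂ), (β:ℂ)*(1+Complex.I)])‖ +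
        ‖star (![(α:ℂ), (β:ℂ)*(1+Complex.I)]) ⬝ᵥ (!![0, -Complex.I; Complex.I, 0] : Matrix (Fin 2) (Fin 2) ℂ).mulVec (![(α:ℂ), (β:ℂ)*(1+Complex.I)])‖ +
        ‖star (![(α:ℂ), (β:ℂ)*(1+Complex.I)]) ⬝ᵥ (!![1, 0; 0, -1] : Matrix (Fin 2) (Fin 2) ℂ).mulVec (![(α:ℂ), (β:ℂ)*(1+Complex.I)])‖ = s := by
  constructor
  · simp [dotProduct, Fin.sum_univ_two, Complex.ext_iff, Complex.mul_re, Complex.mul_im]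
    nlinarith [hnorm]
  · simp only [dotProduct, Matrix.mulVec, Fin.sum_univ_two, Pi.star_apply,
      Matrix.cons_val_zero, Matrix.cons_val_one, Matrix.head_cons]
    simp only [Matrix.cons_val', Matrix.cons_val_zero, Matrix.cons_val_one, Matrix.head_cons,
      Matrix.empty_val', Matrix.cons_val_fin_one, Matrix.head_fin_const, Matrix.of_apply]
    have A1 : star ((α:ℂ)) * ((0:ℂ) * ↑α + 1 * (↑β * (1 + Complex.I)))
        + star ((β:ℂ) * (1 + Complex.I)) * ((1:ℂ) * ↑α + 0 * (↑β * (1 + Complex.I)))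
        = ((2*(α*β) : ℝ) : ℂ) := by
      simp [Complex.ext_iff, Complex.mul_re, Complex.mul_im]
      constructor <;> ring
    have A2 : star ((α:ℂ)) * ((0:ℂ) * ↑α + (-Complex.I) * (↑β * (1 + Complex.I)))
        + star ((β:ℂ) * (1 + Complex.I)) * (Complex.I * ↑α + 0 * (↑β * (1 + Complex.I)))
        = ((2*(α*β) : ℝ) : ℂ) := by
      simp [Complex.ext_iff, Complex.mul_re, Complex.mul_im]
      constructor <;> ring
    have A3 : star ((α:ℂ)) * ((1:ℂ) * ↑α + 0 * (↑β * (1 + Complex.I)))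
        + star ((β:ℂ) * (1 + Complex.I)) * ((0:ℂ) * ↑α + (-1) * (↑β * (1 + Complex.I)))
        = ((α*α - 2*(β*β) : ℝ) : ℂ) := by
      simp [Complex.ext_iff, Complex.mul_re, Complex.mul_im] <;> ring
    rw [A1, A2, A3, Complex.norm_real, Real.norm_eq_abs, Complex.norm_real, Real.norm_eq_abs, h2ab, hz,
      abs_of_nonneg (by positivity)]
    rw [show (1:ℝ)/s + 1/s + 1/s = 3/s by ring, h3s]

theorem pauli_xyz_expectation_max_sqrt_three' :
    (∀ ψ : Fin 2 → ℂ, star ψ ⬝ᵥ ψ = 1 →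
      ‖star ψ ⬝ᵥ (!![0, 1; 1, 0] : Matrix (Fin 2) (Fin 2) ℂ).mulVec ψ‖ +
        ‖star ψ ⬝ᵥ (!![0, -Complex.I; Complex.I, 0] :
          Matrix (Fin 2) (Fin 2) ℂ).mulVec ψ‖ +
        ‖star ψ ⬝ᵥ (!![1, 0; 0, -1] : Matrix (Fin 2) (Fin 2) ℂ).mulVec ψ‖
      ≤ Real.sqrt 3) ∧
    (∃ ψ : Fin 2 → ℂ, star ψ ⬝ᵥ ψ = 1 ∧
      ‖star ψ ⬝ᵥ (!![0, 1; 1, 0] : Matrix (Fin 2) (Fin 2) ℂ).mulVec ψ‖ +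
        ‖star ψ ⬝ᵥ (!![0, -Complex.I; Complex.I, 0] :
          Matrix (Fin 2) (Fin 2) ℂ).mulVec ψ‖ +
        ‖star ψ ⬝ᵥ (!![1, 0; 0, -1] : Matrix (Fin 2) (Fin 2) ℂ).mulVec ψ‖
      = Real.sqrt 3) := by
  constructor
  · intro ψ h
    simp only [dotProduct, Matrix.mulVec, Fin.sum_univ_two, Pi.star_apply, Complex.star_def] at h ⊢
    set a := ψ 0 with ha
    set b := ψ 1 with hb
    set u : ℂ := (starRingEnd ℂ) a * b with hu
    have hre : Complex.normSq a + Complex.normSq b = 1 := by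
      have := congrArg Complex.re h
      simpa [Complex.normSq_apply, Complex.mul_re] using this
    have e1 : (starRingEnd ℂ) a * (!![(0:ℂ),1;1,0] 0 0 * a + !![(0:ℂ),1;1,0] 0 1 * b)
        + (starRingEnd ℂ) b * (!![(0:ℂ),1;1,0] 1 0 * a + !![(0:ℂ),1;1,0] 1 1 * b)
        = ((2 * u.re : ℝ) : ℂ) := by
      simp [Complex.ext_iff, Complex.mul_re, Complex.mul_im, hu]
      constructor <;> ring
    have e2 : (starRingEnd ℂ) a * (!![(0:ℂ),-Complex.I;Complex.I,0] 0 0 * a + !![(0:ℂ),-Complex.I;Complex.I,0] 0 1 * b)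
        + (starRingEnd ℂ) b * (!![(0:ℂ),-Complex.I;Complex.I,0] 1 0 * a + !![(0:ℂ),-Complex.I;Complex.I,0] 1 1 * b)
        = ((2 * u.im : ℝ) : ℂ) := by
      simp [Complex.ext_iff, Complex.mul_re, Complex.mul_im, hu]
      constructor <;> ring
    have e3 : (starRingEnd ℂ) a * (!![(1:ℂ),0;0,-1] 0 0 * a + !![(1:ℂ),0;0,-1] 0 1 * b)
        + (starRingEnd ℂ) b * (!![(1:ℂ),0;0,-1] 1 0 * a + !![(1:ℂ),0;0,-1] 1 1 * b)
        = ((Complex.normSq a - Complex.normSq b : ℝ) : ℂ) := by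
      simp [Complex.ext_iff, Complex.mul_re, Complex.mul_im, Complex.normSq_apply]
      constructor <;> ring
    rw [e1, e2, e3, Complex.norm_real, Real.norm_eq_abs, Complex.norm_real, Real.norm_eq_abs, Complex.norm_real, Real.norm_eq_abs]
    have hur : u.re = a.re*b.re + a.im*b.im := by simp [hu, Complex.mul_re]
    have hui : u.im = a.re*b.im - a.im*b.re := by simp [hu, Complex.mul_im]; ring
    have h1 : u.re^2 + u.im^2 = Complex.normSq a * Complex.normSq b := by
      rw [hur, hui]; simp [Complex.normSq_apply]; ring
    have key : (2 * u.re)^2 + (2 * u.im)^2 + (Complex.normSq a - Complex.normSq b)^2 = 1 := by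
      nlinarith [hre]
    have hnn : 0 ≤ |2 * u.re| + |2 * u.im| + |Complex.normSq a - Complex.normSq b| := by positivity
    have hsq : (|2 * u.re| + |2 * u.im| + |Complex.normSq a - Complex.normSq b|)^2 ≤ 3 := by
      nlinarith [sq_abs (2*u.re), sq_abs (2*u.im), sq_abs (Complex.normSq a - Complex.normSq b),
        sq_nonneg (|2*u.re| - |2*u.im|), sq_nonneg (|2*u.re| - |Complex.normSq a - Complex.normSq b|),
        sq_nonneg (|2*u.im| - |Complex.normSq a - Complex.normSq b|), key]
    exact (Real.le_sqrt hnn (by norm_num)).mpr hsq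
  · set s : ℝ := Real.sqrt 3 with hsdef
    have hs2 : s^2 = 3 := Real.sq_sqrt (by norm_num)
    have hs0 : 0 < s := Real.sqrt_pos.mpr (by norm_num)
    have hs1 : (0:ℝ) < s + 1 := by linarith
    set α : ℝ := Real.sqrt ((s+1)/(2*s)) with hαdef
    have hα2 : α^2 = (s+1)/(2*s) := Real.sq_sqrt (by positivity)
    have hα0 : 0 ≤ α := Real.sqrt_nonneg _
    set β : ℝ := α/(s+1) with hβdef
    have hβ0 : 0 ≤ β := by positivity
    have haa : α*α = (s+1)/(2*s) := by rw [← sq]; exact hα2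
    have hbb : β*β = 1/(2*s*(s+1)) := by
      rw [hβdef, div_mul_div_comm, haa]
      rw [div_div]
      rw [eq_div_iff (by positivity), div_mul_eq_mul_div, div_eq_iff (by positivity)]
      ring
    have hab : α*β = 1/(2*s) := by
      rw [hβdef, mul_div_assoc', ← sq, hα2, div_div]
      rw [div_eq_div_iff (by positivity) (by positivity)]
      ring
    have hnorm : α*α + 2*(β*β) = 1 := by
      rw [haa, hbb]
      field_simp
      nlinarith [hs2]
    have h2ab : 2*(α*β) = 1/s := by
      rw [hab]
      field_simp
    have hz : α*α - 2*(β*β) = 1/s := by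
      rw [haa, hbb]
      field_simp
      nlinarith [hs2]
    have h3s : 3/s = s := by
      rw [div_eq_iff hs0.ne']; nlinarith
    obtain ⟨H1, H2⟩ := pauli_aux s α β hs0 hα0 hβ0 hnorm h2ab hz h3s
    exact ⟨![(α:ℂ), (β:ℂ)*(1+Complex.I)], H1, H2⟩

/-- `max_ψ |⟨ψ, σ_x ψ⟩| + |⟨ψ, σ_y ψ⟩| + |⟨ψ, σ_z ψ⟩| = √3` over unit
vectors `ψ ∈ ℂ²`. -/
theorem pauli_xyz_expectation_max_sqrt_three :
    (∀ ψ : Fin 2 → ℂ, star ψ ⬝ᵥ ψ = 1 →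
      ‖star ψ ⬝ᵥ (!![0, 1; 1, 0] : Matrix (Fin 2) (Fin 2) ℂ).mulVec ψ‖ +
        ‖star ψ ⬝ᵥ (!![0, -Complex.I; Complex.I, 0] :
          Matrix (Fin 2) (Fin 2) ℂ).mulVec ψ‖ +
        ‖star ψ ⬝ᵥ (!![1, 0; 0, -1] : Matrix (Fin 2) (Fin 2) ℂ).mulVec ψ‖
      ≤ Real.sqrt 3) ∧
    (∃ ψ : Fin 2 → ℂ, star ψ ⬝ᵥ ψ = 1 ∧
      ‖star ψ ⬝ᵥ (!![0, 1; 1, 0] : Matrix (Fin 2) (Fin 2) ℂ).mulVec ψ‖ +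
        ‖star ψ ⬝ᵥ (!![0, -Complex.I; Complex.I, 0] :
          Matrix (Fin 2) (Fin 2) ℂ).mulVec ψ‖ +
        ‖star ψ ⬝ᵥ (!![1, 0; 0, -1] : Matrix (Fin 2) (Fin 2) ℂ).mulVec ψ‖
      = Real.sqrt 3) := by
  exact pauli_xyz_expectation_max_sqrt_three'
end
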